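/- There exists a finite group G such that the order of the commutator subgroup of G does not divide the order of the automorphism group of G. -/

import Mathlib

set_option maxHeartbeats 4000000

namespace S19

inductive Z3 | c0 | c1 | c2
  deriving DecidableEq

instance : Fintype Z3 := ⟨{Z3.c0, Z3.c1, Z3.c2}, fun x => by cases x <;> decide⟩

inductive Z4 | d0 | d1 | d2 | d3
  deriving DecidableEq

instance : Fintype Z4 := ⟨{Z4.d0, Z4.d1, Z4.d2, Z4.d3}, fun x => by cases x <;> decide⟩

open Z3 Z4
open scoped commutatorElement

def add3 : Z3 → Z3 → Z3
  | c0, x => x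
  | c1, c0 => c1
  | c1, c1 => c2
  | c1, c2 => c0
  | c2, c0 => c2
  | c2, c1 => c0
  | c2, c2 => c1

def mul3 : Z3 → Z3 → Z3
  | c0, _ => c0
  | c1, x => x
  | c2, c0 => c0
  | c2, c1 => c2
  | c2, c2 => c1

def neg3 : Z3 → Z3
  | c0 => c0
  | c1 => c2
  | c2 => c1

def add4 : Z4 → Z4 → Z4
  | d0, x => x
  | d1, d0 => d1
  | d1, d1 => d2
  | d1, d2 => d3
  | d1, d3 => d0
  | d2, d0 => d2
  | d2, d1 => d3
  | d2, d2 => d0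
  | d2, d3 => d1
  | d3, d0 => d3
  | d3, d1 => d0
  | d3, d2 => d1
  | d3, d3 => d2

def neg4 : Z4 → Z4
  | d0 => d0
  | d1 => d3
  | d2 => d2
  | d3 => d1

abbrev V : Type := Z3 × Z3 × Z3

/-- Heisenberg group multiplication: (a,b,c)(a',b',c') = (a+a', b+b', c+c'+ab'). -/
def hmul (x y : V) : V :=
  (add3 x.1 y.1, add3 x.2.1 y.2.1, add3 (add3 x.2.2 y.2.2) (mul3 x.1 y.2.1))

def hinv (x : V) : V := (neg3 x.1, neg3 x.2.1, add3 (mul3 x.1 x.2.1) (neg3 x.2.2))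

/-- Order-4 automorphism of the Heisenberg group: (a,b,c) ↦ (-b, a, c - ab). -/
def alpha (x : V) : V :=
  (neg3 x.2.1, x.1, add3 x.2.2 (neg3 (mul3 x.1 x.2.1)))

def act : Z4 → V → V
  | d0, v => v
  | d1, v => alpha v
  | d2, v => alpha (alpha v)
  | d3, v => alpha (alpha (alpha v))

abbrev Gr : Type := V × Z4

def gmul (g h : Gr) : Gr := (hmul g.1 (act g.2 h.1), add4 g.2 h.2)
def gone : Gr := ((c0, c0, c0), d0)
def ginv (g : Gr) : Gr := (act (neg4 g.2) (hinv g.1), neg4 g.2)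

/-! Bool-valued finite quantifier machinery (fast kernel evaluation). -/

def allZ3 (f : Z3 → Bool) : Bool := f c0 && f c1 && f c2
def allZ4 (f : Z4 → Bool) : Bool := f d0 && f d1 && f d2 && f d3
def allV (f : V → Bool) : Bool := allZ3 fun a => allZ3 fun b => allZ3 fun c => f (a,b,c)
def allG (f : Gr → Bool) : Bool := allV fun v => allZ4 fun t => f (v,t)

lemma allZ3_spec {f : Z3 → Bool} (h : allZ3 f = true) : ∀ x, f x = true := by
  intro x
  simp only [allZ3, Bool.and_eq_true] at h
  cases x
  exacts [h.1.1, h.1.2, h.2]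

lemma allZ4_spec {f : Z4 → Bool} (h : allZ4 f = true) : ∀ x, f x = true := by
  intro x
  simp only [allZ4, Bool.and_eq_true] at h
  cases x
  exacts [h.1.1.1, h.1.1.2, h.1.2, h.2]

lemma allV_spec {f : V → Bool} (h : allV f = true) : ∀ x, f x = true := by
  intro x
  obtain ⟨a, b, c⟩ := x
  exact allZ3_spec (allZ3_spec (allZ3_spec h a) b) c

lemma allG_spec {f : Gr → Bool} (h : allG f = true) : ∀ x, f x = true := by
  intro x
  obtain ⟨v, t⟩ := x
  exact allZ4_spec (allV_spec h v) t

/-! Group axioms. -/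

lemma act_add (s t : Z4) (v : V) : act (add4 s t) v = act s (act t v) := by
  have h : allZ4 (fun s => allZ4 fun t => allV fun v =>
      act (add4 s t) v == act s (act t v)) = true := by rfl
  exact eq_of_beq (allV_spec (allZ4_spec (allZ4_spec h s) t) v)

lemma act_hmul (t : Z4) (v w : V) : act t (hmul v w) = hmul (act t v) (act t w) := by
  have h : allZ4 (fun t => allV fun v => allV fun w =>
      act t (hmul v w) == hmul (act t v) (act t w)) = true := by rfl
  exact eq_of_beq (allV_spec (allV_spec (allZ4_spec h t) v) w)

lemma add3_assoc (a b c : Z3) : add3 (add3 a b) c = add3 a (add3 b c) := by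
  have h : allZ3 (fun a => allZ3 fun b => allZ3 fun c =>
      add3 (add3 a b) c == add3 a (add3 b c)) = true := by rfl
  exact eq_of_beq (allZ3_spec (allZ3_spec (allZ3_spec h a) b) c)

lemma add3_comm (a b : Z3) : add3 a b = add3 b a := by
  have h : allZ3 (fun a => allZ3 fun b => add3 a b == add3 b a) = true := by rfl
  exact eq_of_beq (allZ3_spec (allZ3_spec h a) b)

lemma add3_left_comm (a b c : Z3) : add3 a (add3 b c) = add3 b (add3 a c) := by
  rw [← add3_assoc, add3_comm a b, add3_assoc]

lemma mul3_add (a b c : Z3) : mul3 a (add3 b c) = add3 (mul3 a b) (mul3 a c) := by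
  have h : allZ3 (fun a => allZ3 fun b => allZ3 fun c =>
      mul3 a (add3 b c) == add3 (mul3 a b) (mul3 a c)) = true := by rfl
  exact eq_of_beq (allZ3_spec (allZ3_spec (allZ3_spec h a) b) c)

lemma add3_mul (a b c : Z3) : mul3 (add3 a b) c = add3 (mul3 a c) (mul3 b c) := by
  have h : allZ3 (fun a => allZ3 fun b => allZ3 fun c =>
      mul3 (add3 a b) c == add3 (mul3 a c) (mul3 b c)) = true := by rfl
  exact eq_of_beq (allZ3_spec (allZ3_spec (allZ3_spec h a) b) c)

lemma hmul_assoc (a b c : V) : hmul (hmul a b) c = hmul a (hmul b c) := by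
  obtain ⟨a1, a2, a3⟩ := a
  obtain ⟨b1, b2, b3⟩ := b
  obtain ⟨c1, c2, c3⟩ := c
  show (add3 (add3 a1 b1) c1, add3 (add3 a2 b2) c2,
        add3 (add3 (add3 (add3 a3 b3) (mul3 a1 b2)) c3) (mul3 (add3 a1 b1) c2))
     = (add3 a1 (add3 b1 c1), add3 a2 (add3 b2 c2),
        add3 (add3 a3 (add3 (add3 b3 c3) (mul3 b1 c2))) (mul3 a1 (add3 b2 c2)))
  refine Prod.ext (add3_assoc _ _ _) (Prod.ext (add3_assoc _ _ _) ?_)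
  simp only [add3_mul, mul3_add, add3_assoc, add3_comm, add3_left_comm]

lemma add4_assoc (a b c : Z4) : add4 (add4 a b) c = add4 a (add4 b c) := by
  have h : allZ4 (fun a => allZ4 fun b => allZ4 fun c =>
      add4 (add4 a b) c == add4 a (add4 b c)) = true := by rfl
  exact eq_of_beq (allZ4_spec (allZ4_spec (allZ4_spec h a) b) c)

lemma gmul_assoc (a b c : Gr) : gmul (gmul a b) c = gmul a (gmul b c) := by
  show (hmul (hmul a.1 (act a.2 b.1)) (act (add4 a.2 b.2) c.1), add4 (add4 a.2 b.2) c.2)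
     = (hmul a.1 (act a.2 (hmul b.1 (act b.2 c.1))), add4 a.2 (add4 b.2 c.2))
  rw [act_add, act_hmul, hmul_assoc, add4_assoc]

lemma gone_mul (a : Gr) : gmul gone a = a := by
  have h : allG (fun a => gmul gone a == a) = true := by rfl
  exact eq_of_beq (allG_spec h a)

lemma gmul_one (a : Gr) : gmul a gone = a := by
  have h : allG (fun a => gmul a gone == a) = true := by rfl
  exact eq_of_beq (allG_spec h a)

lemma ginv_mul (a : Gr) : gmul (ginv a) a = gone := by
  have h : allG (fun a => gmul (ginv a) a == gone) = true := by rfl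
  exact eq_of_beq (allG_spec h a)

instance : Group Gr where
  mul := gmul
  one := gone
  inv := ginv
  mul_assoc := gmul_assoc
  one_mul := gone_mul
  mul_one := gmul_one
  inv_mul_cancel := ginv_mul

lemma gr_mul_def (a b : Gr) : a * b = gmul a b := rfl

/-! Distinguished elements. -/

def ee : Gr := ((c0, c0, c0), d1)  -- order 4
def ww : Gr := ((c0, c1, c0), d2)  -- order 2
def xx : Gr := ((c1, c0, c0), d0)  -- order 3
def yy : Gr := ((c0, c1, c0), d0)
def zz : Gr := ((c0, c0, c1), d0)

def n3 : Z3 → ℕ | c0 => 0 | c1 => 1 | c2 => 2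
def n4 : Z4 → ℕ | d0 => 0 | d1 => 1 | d2 => 2 | d3 => 3

def sub3 (a b : Z3) : Z3 := add3 a (neg3 b)

def pw (g : Gr) : ℕ → Gr
  | 0 => gone
  | n+1 => gmul (pw g n) g

lemma pw_eq (g : Gr) (n : ℕ) : g ^ n = pw g n := by
  induction n with
  | zero => rfl
  | succ n ih => rw [pow_succ, ih]; rfl

/-- Normal form: every element is xx^a * yy^b * zz^(c-ab) * ee^t. -/
lemma decomp (g : Gr) :
    g = xx ^ n3 g.1.1 * yy ^ n3 g.1.2.1 *
        zz ^ n3 (sub3 g.1.2.2 (mul3 g.1.1 g.1.2.1)) * ee ^ n4 g.2 := by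
  simp only [gr_mul_def, pw_eq]
  have h : allG (fun g =>
      g == gmul (gmul (gmul (pw xx (n3 g.1.1)) (pw yy (n3 g.1.2.1)))
        (pw zz (n3 (sub3 g.1.2.2 (mul3 g.1.1 g.1.2.1))))) (pw ee (n4 g.2))) = true := by rfl
  exact eq_of_beq (allG_spec h g)

/-! The commutator subgroup contains the copy of the Heisenberg group,
    a subgroup of order 27. -/

def K : Subgroup Gr where
  carrier := {g | g.2 = d0}
  mul_mem' := by
    intro a b ha hb
    show add4 a.2 b.2 = d0
    rw [show a.2 = d0 from ha, show b.2 = d0 from hb]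
    rfl
  one_mem' := rfl
  inv_mem' := by
    intro a ha
    show neg4 a.2 = d0
    rw [show a.2 = d0 from ha]
    rfl

instance : DecidablePred (· ∈ K) := fun g => decidable_of_iff (g.2 = d0) Iff.rfl

lemma cardK : Nat.card K = 27 := by
  rw [Nat.card_eq_fintype_card]
  decide

lemma xx_mem : xx ∈ commutator Gr := by
  have h : xx = ⁅(((c0,c0,c0), d2) : Gr), xx⁆ := by decide
  rw [commutator_def, h]
  exact Subgroup.commutator_mem_commutator (Subgroup.mem_top _) (Subgroup.mem_top _)

lemma yy_mem : yy ∈ commutator Gr := by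
  have h : yy = ⁅(((c0,c0,c0), d2) : Gr), yy⁆ := by decide
  rw [commutator_def, h]
  exact Subgroup.commutator_mem_commutator (Subgroup.mem_top _) (Subgroup.mem_top _)

lemma zz_mem : zz ∈ commutator Gr := by
  have h : zz = ⁅xx, yy⁆ := by decide
  rw [commutator_def, h]
  exact Subgroup.commutator_mem_commutator (Subgroup.mem_top _) (Subgroup.mem_top _)

lemma K_le : K ≤ commutator Gr := by
  intro g hg
  have h := decomp g
  rw [show g.2 = d0 from hg] at h
  rw [h]
  exact mul_mem (mul_mem (mul_mem (pow_mem xx_mem _) (pow_mem yy_mem _))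
    (pow_mem zz_mem _)) (by rw [show n4 d0 = 0 from rfl, pow_zero]; exact one_mem _)

lemma h27 : 27 ∣ Nat.card (commutator Gr) :=
  cardK ▸ Subgroup.card_dvd_of_le K_le

/-! An automorphism of order 8. -/

/-- μ(a,b,c) = (a+2b, a+b, 2a²+b²+2ab+2c); an automorphism of the Heisenberg part. -/
def mu (x : V) : V :=
  (add3 x.1 (add3 x.2.1 x.2.1), add3 x.1 x.2.1,
   add3 (add3 (add3 (mul3 x.1 x.1) (mul3 x.1 x.1)) (mul3 x.2.1 x.2.1))
     (add3 (add3 (mul3 x.1 x.2.1) (mul3 x.1 x.2.1)) (add3 x.2.2 x.2.2)))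

def sfun (g : Gr) : Gr := (mu g.1, g.2)

lemma mu_hmul (v w : V) : mu (hmul v w) = hmul (mu v) (mu w) := by
  have h : allV (fun v => allV fun w => mu (hmul v w) == hmul (mu v) (mu w)) = true := by rfl
  exact eq_of_beq (allV_spec (allV_spec h v) w)

lemma mu_act (t : Z4) (v : V) : mu (act t v) = act t (mu v) := by
  have h : allZ4 (fun t => allV fun v => mu (act t v) == act t (mu v)) = true := by rfl
  exact eq_of_beq (allV_spec (allZ4_spec h t) v)

lemma sfun_iter7 (g : Gr) : sfun^[7] (sfun g) = g := by
  have h : allG (fun g => sfun^[7] (sfun g) == g) = true := by rfl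
  exact eq_of_beq (allG_spec h g)

def sigma : MulAut Gr where
  toFun := sfun
  invFun := sfun^[7]
  left_inv := sfun_iter7
  right_inv := fun g => by
    have h : allG (fun g => sfun (sfun^[7] g) == g) = true := by rfl
    exact eq_of_beq (allG_spec h g)
  map_mul' := by
    intro a b
    show sfun (gmul a b) = gmul (sfun a) (sfun b)
    show (mu (hmul a.1 (act a.2 b.1)), add4 a.2 b.2)
       = (hmul (mu a.1) (act a.2 (mu b.1)), add4 a.2 b.2)
    rw [mu_hmul, mu_act]

lemma sigma_pow_apply (k : ℕ) (g : Gr) : (sigma ^ k) g = sfun^[k] g := by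
  induction k generalizing g with
  | zero => rfl
  | succ n ih =>
    rw [pow_succ, MulAut.mul_apply, Function.iterate_succ_apply]
    exact ih (sfun g)

lemma sigma_pow8 : sigma ^ (8:ℕ) = 1 := by
  apply MulEquiv.ext
  intro g
  rw [sigma_pow_apply]
  have h : allG (fun g => sfun^[8] g == g) = true := by rfl
  exact eq_of_beq (allG_spec h g)

lemma sigma_pow4_ne : sigma ^ (4:ℕ) ≠ 1 := by
  intro h
  have h2 : (sigma ^ (4:ℕ)) yy = yy := by rw [h]; rfl
  rw [sigma_pow_apply] at h2
  exact absurd h2 (by decide)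

lemma order_sigma : orderOf sigma = 8 := by
  have : Fact (Nat.Prime 2) := ⟨by norm_num⟩
  have h := orderOf_eq_prime_pow (p := 2) (n := 2) (x := sigma)
    (by rw [show (2:ℕ)^2 = 4 from rfl]; exact sigma_pow4_ne)
    (by rw [show (2:ℕ)^(2+1) = 8 from rfl]; exact sigma_pow8)
  rw [h]; norm_num

lemma h8 : 8 ∣ Nat.card (MulAut Gr) :=
  order_sigma ▸ orderOf_dvd_natCard sigma

/-! An injection of MulAut Gr into a set of size 162 = 18 · 9. -/

def S4 : Type := {g : Gr // (g * g) * (g * g) = 1 ∧ g * g ≠ 1}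
def S2 : Type := {g : Gr // g * g = 1 ∧ g ≠ 1}

instance : Fintype S4 := by unfold S4; infer_instance
instance : Fintype S2 := by unfold S2; infer_instance

lemma cardS4 : Fintype.card S4 = 18 := by
  show Fintype.card {g : Gr // (g * g) * (g * g) = 1 ∧ g * g ≠ 1} = 18
  decide

lemma cardS2 : Fintype.card S2 = 9 := by
  show Fintype.card {g : Gr // g * g = 1 ∧ g ≠ 1} = 9
  decide

def inj (φ : MulAut Gr) : S4 × S2 :=
  ⟨⟨φ ee, by
      constructor
      · simp only [← map_mul]
        rw [MulEquiv.map_eq_one_iff]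
        decide
      · simp only [← map_mul, ne_eq]
        rw [MulEquiv.map_eq_one_iff]
        decide⟩,
   ⟨φ ww, by
      constructor
      · simp only [← map_mul]
        rw [MulEquiv.map_eq_one_iff]
        decide
      · simp only [ne_eq]
        rw [MulEquiv.map_eq_one_iff]
        decide⟩⟩

lemma gen_top : Subgroup.closure ({ee, ww} : Set Gr) = ⊤ := by
  rw [eq_top_iff]
  intro g _
  have hee : ee ∈ Subgroup.closure ({ee, ww} : Set Gr) :=
    Subgroup.subset_closure (Set.mem_insert _ _)
  have hww : ww ∈ Subgroup.closure ({ee, ww} : Set Gr) :=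
    Subgroup.subset_closure (Set.mem_insert_of_mem _ rfl)
  have hxx : xx ∈ Subgroup.closure ({ee, ww} : Set Gr) := by
    have h : xx = ee⁻¹ * ww * ee⁻¹ := by decide
    rw [h]
    exact mul_mem (mul_mem (inv_mem hee) hww) (inv_mem hee)
  have hyy : yy ∈ Subgroup.closure ({ee, ww} : Set Gr) := by
    have h : yy = ww * ee * ee := by decide
    rw [h]
    exact mul_mem (mul_mem hww hee) hee
  have hzz : zz ∈ Subgroup.closure ({ee, ww} : Set Gr) := by
    have h : zz = (ee⁻¹ * ww) * (ee⁻¹ * ww) * (ee⁻¹ * ww) * (ee⁻¹ * ww) := by decide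
    rw [h]
    have hu := mul_mem (inv_mem hee) hww
    exact mul_mem (mul_mem (mul_mem hu hu) hu) hu
  rw [decomp g]
  exact mul_mem (mul_mem (mul_mem (pow_mem hxx _) (pow_mem hyy _))
    (pow_mem hzz _)) (pow_mem hee _)

lemma inj_injective : Function.Injective inj := by
  intro φ ψ h
  have h1 : φ ee = ψ ee := congrArg (fun p => (p.1 : S4).val) h
  have h2 : φ ww = ψ ww := congrArg (fun p => (p.2 : S2).val) h
  have : (φ : Gr →* Gr) = (ψ : Gr →* Gr) := by
    apply MonoidHom.eq_of_eqOn_dense gen_top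
    intro x hx
    rcases hx with rfl | hx
    · exact h1
    · rw [Set.mem_singleton_iff] at hx
      subst hx
      exact h2
  exact MulEquiv.ext fun g => congrArg (fun (f : Gr →* Gr) => f g) this

instance : Finite (MulAut Gr) := Finite.of_injective inj inj_injective

lemma card_le : Nat.card (MulAut Gr) ≤ 162 := by
  have h := Nat.card_le_card_of_injective inj inj_injective
  have h2 : Nat.card (S4 × S2) = 162 := by
    rw [Nat.card_eq_fintype_card, Fintype.card_prod, cardS4, cardS2]
  omega

end S19

theorem stmt_19 :
    ∃ (G : Type) (_ : Group G) (_ : Fintype G),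
      ¬ (Nat.card (commutator G) ∣ Nat.card (MulAut G)) := by
  refine ⟨S19.Gr, inferInstance, inferInstance, ?_⟩
  intro hdvd
  have h27N : 27 ∣ Nat.card (MulAut S19.Gr) := dvd_trans S19.h27 hdvd
  have h8N : 8 ∣ Nat.card (MulAut S19.Gr) := S19.h8
  have h216 : 8 * 27 ∣ Nat.card (MulAut S19.Gr) :=
    Nat.Coprime.mul_dvd_of_dvd_of_dvd (by norm_num) h8N h27N
  have hpos : 0 < Nat.card (MulAut S19.Gr) := Nat.card_pos
  have hge := Nat.le_of_dvd hpos h216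
  have hle := S19.card_le
  omega
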